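/- Suppose μ(w) contains a factor u of period p with |u|/p > 2. Then p is even and w contains a factor v of length ⌈|u|/2⌉ with period p/2. -/

import Mathlib

/-- Thue–Morse morphism: 0 ↦ 01, 1 ↦ 10 (false = 0, true = 1). -/
def mu : List Bool → List Bool :=
  fun w => w.flatMap (fun b => if b then [true, false] else [false, true])

/-- `w` has period `p`: `w[i] = w[i+p]` whenever both defined. -/
def HasPeriod (w : List Bool) (p : ℕ) : Prop :=
  ∀ i, i + p < w.length → w[i]? = w[i + p]?

/-- `w` is α-power-free: no factor `u` has a period `p` with `|u|/p ≥ α`. -/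
def PowerFree (α : ℝ) (w : List Bool) : Prop :=
  ∀ u p, u <:+: w → 0 < p → HasPeriod u p → (u.length : ℝ) / p < α

/-- `𝓛`: factors of images of `mu`. -/
def InL (w : List Bool) : Prop := ∃ x, w <:+: mu x

lemma mu_nil : mu [] = [] := rfl

lemma mu_cons (b : Bool) (w : List Bool) :
    mu (b :: w) = (if b then [true, false] else [false, true]) ++ mu w := rfl

lemma mu_length (w : List Bool) : (mu w).length = 2 * w.length := by
  induction w with
  | nil => rfl
  | cons b w ih => cases b <;> simp [mu_cons, ih] <;> omega

lemma mu_get_even (w : List Bool) (i : ℕ) :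
    (mu w)[2 * i]? = w[i]? := by
  induction w generalizing i with
  | nil => simp [mu_nil]
  | cons b w ih =>
    cases i with
    | zero => cases b <;> rfl
    | succ i =>
      have h : 2 * (i + 1) = (2 * i) + 1 + 1 := by ring
      rw [h]
      cases b
      · show (false :: true :: mu w)[2 * i + 1 + 1]? = (false :: w)[i + 1]?
        rw [List.getElem?_cons_succ, List.getElem?_cons_succ, List.getElem?_cons_succ]
        exact ih i
      · show (true :: false :: mu w)[2 * i + 1 + 1]? = (true :: w)[i + 1]?
        rw [List.getElem?_cons_succ, List.getElem?_cons_succ, List.getElem?_cons_succ]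
        exact ih i

lemma mu_get_odd (w : List Bool) (i : ℕ) :
    (mu w)[2 * i + 1]? = (w[i]?).map not := by
  induction w generalizing i with
  | nil => simp [mu_nil]
  | cons b w ih =>
    cases i with
    | zero => cases b <;> rfl
    | succ i =>
      have h : 2 * (i + 1) + 1 = (2 * i + 1) + 1 + 1 := by ring
      rw [h]
      cases b
      · show (false :: true :: mu w)[2 * i + 1 + 1 + 1]? = ((false :: w)[i + 1]?).map not
        rw [List.getElem?_cons_succ, List.getElem?_cons_succ, List.getElem?_cons_succ]
        exact ih i
      · show (true :: false :: mu w)[2 * i + 1 + 1 + 1]? = ((true :: w)[i + 1]?).map not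
        rw [List.getElem?_cons_succ, List.getElem?_cons_succ, List.getElem?_cons_succ]
        exact ih i

lemma opt_notnot (o : Option Bool) : (o.map not).map not = o := by
  cases o <;> simp

lemma mu_P (w : List Bool) (i : ℕ) :
    (mu w)[2 * i]? = ((mu w)[2 * i + 1]?).map not := by
  rw [mu_get_even, mu_get_odd, opt_notnot]

theorem factor_of_mu_desubstitution (w u : List Bool) (p : ℕ) (hp : 0 < p)
    (hu : u <:+: mu w) (hper : HasPeriod u p) (hexp : 2 < (u.length : ℝ) / p) :
    2 ∣ p ∧ ∃ v : List Bool, v <:+: w ∧ v.length = (u.length + 1) / 2 ∧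
      HasPeriod v (p / 2) := by
  obtain ⟨s, t, hst⟩ := hu
  set a := s.length with ha
  set n := u.length with hnn
  have h2p : 2 * p + 1 ≤ n := by
    have h1 : (2 : ℝ) * p < n := (lt_div_iff₀ (by exact_mod_cast hp)).mp hexp
    have h2 : 2 * p < n := by exact_mod_cast h1
    omega
  have hlen : a + n ≤ 2 * w.length := by
    have h := congrArg List.length hst
    simp [mu_length] at h
    omega
  have key : ∀ j, j < n → (mu w)[a + j]? = u[j]? := by
    intro j hj
    rw [← hst, List.append_assoc,
      List.getElem?_append_right (by omega : s.length ≤ a + j)]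
    have : a + j - s.length = j := by omega
    rw [this, List.getElem?_append_left hj]
  have periodE' : ∀ j, a ≤ j → j + p < a + n →
      (mu w)[j]? = (mu w)[j + p]? := by
    intro j hja hjn
    have h1 := key (j - a) (by omega)
    have h2 := key (j - a + p) (by omega)
    have e1 : a + (j - a) = j := by omega
    have e2 : a + (j - a + p) = j + p := by omega
    rw [e1] at h1; rw [e2] at h2
    rw [h1, h2]
    exact hper (j - a) (by omega)
  have hpeven : p % 2 = 0 := by
    by_contra hodd
    have hp1 : p % 2 = 1 := by omega
    have alt : ∀ j, a ≤ j → j + 1 + p < a + n →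
        (mu w)[j]? = ((mu w)[j + 1]?).map not := by
      intro j hja hjn
      rcases Nat.even_or_odd j with ⟨i, hi⟩ | ⟨i, hi⟩
      · have hji : j = 2 * i := by omega
        rw [hji]; exact mu_P w i
      · have e1 : (mu w)[j]? = (mu w)[j + p]? := periodE' j hja (by omega)
        have e2 : (mu w)[j + 1]? = (mu w)[j + 1 + p]? :=
          periodE' (j + 1) (by omega) (by omega)
        have e3 : (mu w)[j + p]? = ((mu w)[j + p + 1]?).map not := by
          obtain ⟨m, hm⟩ : ∃ m, j + p = 2 * m := ⟨(j + p) / 2, by omega⟩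
          rw [hm]; exact mu_P w m
        have e4 : j + p + 1 = j + 1 + p := by ring
        rw [e1, e3, e4, ← e2]
    have chain : ∀ k, k ≤ p →
        (mu w)[a + k]? =
          if k % 2 = 0 then (mu w)[a]? else ((mu w)[a]?).map not := by
      intro k
      induction k with
      | zero => simp
      | succ k ih =>
        intro hk
        have hrec := ih (by omega)
        have hstep := alt (a + k) (by omega) (by omega)
        have hinv : (mu w)[a + k + 1]? = ((mu w)[a + k]?).map not := by
          have h := congrArg (Option.map not) hstep
          rw [opt_notnot] at h
          exact h.symm
        have hk1 : a + (k + 1) = a + k + 1 := by ring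
        rw [hk1, hinv, hrec]
        rcases Nat.even_or_odd k with ⟨i, hi⟩ | ⟨i, hi⟩
        · rw [if_pos (by omega), if_neg (by omega)]
        · rw [if_neg (by omega), if_pos (by omega), opt_notnot]
    have hap : (mu w)[a + p]? = ((mu w)[a]?).map not := by
      have h := chain p le_rfl
      rw [if_neg (by omega)] at h; exact h
    have hper0 := periodE' a le_rfl (by omega)
    have hsome : ∃ b, (mu w)[a]? = some b := by
      have h := key 0 (by omega)
      rw [Nat.add_zero] at h
      cases hu0 : u[0]? with
      | none => have := List.getElem?_eq_none_iff.mp hu0; omega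
      | some b => exact ⟨b, by rw [h, hu0]⟩
    obtain ⟨b, hb⟩ := hsome
    rw [hb, hap, hb] at hper0
    simp at hper0
  -- p is even
  have hq2 : p = 2 * (p / 2) := by omega
  set q := p / 2 with hq
  set c := a / 2 with hc
  set m := (n + 1) / 2 with hm
  refine ⟨Nat.dvd_of_mod_eq_zero hpeven, (w.drop c).take m, ?_, ?_, ?_⟩
  · exact ⟨w.take c, (w.drop c).drop m, by
      rw [List.append_assoc, List.take_append_drop, List.take_append_drop]⟩
  · simp only [List.length_take, List.length_drop]
    omega
  · intro i hi
    have hvlen : ((w.drop c).take m).length = m := by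
      simp only [List.length_take, List.length_drop]; omega
    rw [hvlen] at hi
    have hget : ∀ i', i' < m →
        ((w.drop c).take m)[i']? = (mu w)[2 * (c + i')]? := by
      intro i' hi'
      rw [List.getElem?_take_of_lt hi', List.getElem?_drop, ← mu_get_even]
    rw [hget i (by omega), hget (i + q) hi]
    rcases Nat.even_or_odd a with ⟨x, hx⟩ | ⟨x, hx⟩
    · -- a = 2 * c
      have hac : a = 2 * c := by omega
      have h := periodE' (2 * (c + i)) (by omega) (by omega)
      have h2 : 2 * (c + i) + p = 2 * (c + (i + q)) := by omega
      rw [h2] at h; exact h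
    · -- a = 2 * c + 1
      have hac : a = 2 * c + 1 := by omega
      rcases Nat.eq_zero_or_pos i with rfl | hi1
      · have e1 := mu_P w c
        have e2 := periodE' a le_rfl (by omega)
        have e3 := mu_P w (c + q)
        have h4 : a + p = 2 * (c + q) + 1 := by omega
        have h5 : a = 2 * c + 1 := hac
        rw [h4, h5] at e2
        have goal1 : (mu w)[2 * (c + 0)]? = (mu w)[2 * c]? := by
          norm_num
        rw [goal1, e1, e2, ← e3]
        norm_num
      · obtain ⟨i₁, rfl⟩ : ∃ i₁, i = i₁ + 1 := ⟨i - 1, by omega⟩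
        have h := periodE' (a + (2 * i₁ + 1)) (by omega) (by omega)
        have h5 : a + (2 * i₁ + 1) = 2 * (c + (i₁ + 1)) := by omega
        have h6 : 2 * (c + (i₁ + 1)) + p = 2 * (c + (i₁ + 1 + q)) := by omega
        rw [h5, h6] at h; exact h
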